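/- Let κ ∈ ℂ with Re κ > 0, Im κ > 0 and let Λ_κ be the Fourier multiplier Λ_κ g = ∑_n (n²-κ²)^{-1/2} ĝ(n)e^{int}, using the principal square root. Then there is c > 0 such that for all φ ∈ H^{-1/2}, Re⟨Λ_κ φ, φ̄⟩ ≥ c‖φ‖²_{H^{-1/2}}. -/

import Mathlib

noncomputable def rootK (κ : ℂ) (n : ℤ) : ℂ := ((n : ℂ) ^ 2 - κ ^ 2) ^ ((1 : ℂ) / 2)

/-- The Fourier multiplier Λ_κ : (Λ_κ g)^(n) = (n² - κ²)^{-1/2} ĝ(n). -/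
noncomputable def LamKappa (κ : ℂ) (g : ℤ → ℂ) : ℤ → ℂ := fun n => (rootK κ n)⁻¹ * g n

noncomputable def pairS (f g : ℤ → ℂ) : ℂ := ∑' n : ℤ, f n * g (-n)

noncomputable def conjS (φ : ℤ → ℂ) : ℤ → ℂ := fun n => (starRingEnd ℂ) (φ (-n))

noncomputable def sobWt (s : ℝ) (n : ℤ) : ℝ := if n = 0 then 1 else |(n : ℝ)| ^ (2 * s)

noncomputable def sobNormSq (s : ℝ) (φ : ℤ → ℂ) : ℝ :=
  ∑' n : ℤ, sobWt s n * ‖φ n‖ ^ 2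

open Complex in
lemma zK_im (κ : ℂ) (n : ℤ) : (((n:ℂ))^2 - κ^2).im = -(2*κ.re*κ.im) := by
  simp [pow_two, Complex.sub_im, Complex.mul_im]
  ring

open Complex in
lemma zK_re (κ : ℂ) (n : ℤ) : (((n:ℂ))^2 - κ^2).re = (n:ℝ)^2 - (κ.re^2 - κ.im^2) := by
  simp [pow_two, Complex.sub_re, Complex.mul_re]

lemma zK_ne (κ : ℂ) (h1 : 0 < κ.re) (h2 : 0 < κ.im) (n : ℤ) : ((n:ℂ))^2 - κ^2 ≠ 0 := by
  intro h
  have := zK_im κ n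
  rw [h] at this
  simp at this
  rcases this with h|h <;> linarith

lemma rootK_sq (κ : ℂ) (h1 : 0 < κ.re) (h2 : 0 < κ.im) (n : ℤ) :
    (rootK κ n)^2 = ((n:ℂ))^2 - κ^2 := by
  have hz := zK_ne κ h1 h2 n
  rw [rootK, Complex.cpow_def_of_ne_zero hz, sq, ← Complex.exp_add]
  rw [show Complex.log ((n:ℂ)^2 - κ^2) * (1/2) + Complex.log ((n:ℂ)^2 - κ^2) * (1/2)
      = Complex.log ((n:ℂ)^2 - κ^2) by ring]
  exact Complex.exp_log hz

lemma rootK_re_pos (κ : ℂ) (h1 : 0 < κ.re) (h2 : 0 < κ.im) (n : ℤ) :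
    0 < (rootK κ n).re := by
  have hz := zK_ne κ h1 h2 n
  rw [rootK, Complex.cpow_def_of_ne_zero hz, Complex.exp_re]
  have him : ((n:ℂ)^2 - κ^2).im < 0 := by
    rw [zK_im]; nlinarith
  have harg1 : Complex.arg ((n:ℂ)^2 - κ^2) < 0 := Complex.arg_neg_iff.2 him
  have harg2 : -Real.pi < Complex.arg ((n:ℂ)^2 - κ^2) := Complex.neg_pi_lt_arg _
  have himw : (Complex.log ((n:ℂ)^2 - κ^2) * (1/2)).im
      = Complex.arg ((n:ℂ)^2 - κ^2) / 2 := by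
    simp [Complex.mul_im, Complex.log_im]
    ring
  rw [himw]
  have hpi := Real.pi_pos
  have : 0 < Real.cos (Complex.arg ((n:ℂ)^2 - κ^2) / 2) := by
    apply Real.cos_pos_of_mem_Ioo
    constructor <;> [linarith; linarith]
  positivity

lemma rootK_normSq (κ : ℂ) (h1 : 0 < κ.re) (h2 : 0 < κ.im) (n : ℤ) :
    Complex.normSq (rootK κ n) = ‖(n:ℂ)^2 - κ^2‖ := by
  have h := rootK_sq κ h1 h2 n
  have h2' : (‖rootK κ n‖)^2 = ‖(n:ℂ)^2 - κ^2‖ := by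
    rw [← norm_pow, h]
  rw [← Complex.sq_norm]; exact h2'

lemma rootK_re_eq (κ : ℂ) (h1 : 0 < κ.re) (h2 : 0 < κ.im) (n : ℤ) :
    (rootK κ n).re
      = Real.sqrt ((‖(n:ℂ)^2 - κ^2‖ + ((n:ℂ)^2 - κ^2).re)/2) := by
  have h := rootK_sq κ h1 h2 n
  have hre : (rootK κ n).re^2 - (rootK κ n).im^2 = ((n:ℂ)^2 - κ^2).re := by
    have h' := congrArg Complex.re h
    simp only [pow_two, Complex.mul_re] at h'
    rw [show ((n:ℂ)^2 - κ^2).re = ((n:ℂ)*(n:ℂ) - κ*κ).re by ring_nf, ← h']; ring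
  have hns : (rootK κ n).re^2 + (rootK κ n).im^2 = ‖(n:ℂ)^2 - κ^2‖ := by
    have h3 := rootK_normSq κ h1 h2 n
    rw [Complex.normSq_apply] at h3
    rw [← h3]; ring
  have hpos := rootK_re_pos κ h1 h2 n
  have key : (rootK κ n).re^2
      = (‖(n:ℂ)^2 - κ^2‖ + ((n:ℂ)^2 - κ^2).re)/2 := by linarith
  rw [← key, Real.sqrt_sq hpos.le]

lemma rootK_inv_re (κ : ℂ) (h1 : 0 < κ.re) (h2 : 0 < κ.im) (n : ℤ) :
    ((rootK κ n)⁻¹).re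
      = Real.sqrt ((‖(n:ℂ)^2 - κ^2‖ + ((n:ℂ)^2 - κ^2).re)/2)
        / ‖(n:ℂ)^2 - κ^2‖ := by
  rw [Complex.inv_re, rootK_normSq κ h1 h2 n, rootK_re_eq κ h1 h2 n]

lemma rootK_abs_inv (κ : ℂ) (h1 : 0 < κ.re) (h2 : 0 < κ.im) (n : ℤ) :
    ‖(rootK κ n)⁻¹‖ = (Real.sqrt (‖(n:ℂ)^2 - κ^2‖))⁻¹ := by
  rw [norm_inv, Complex.norm_def, rootK_normSq κ h1 h2 n]

lemma beta_le_A (κ : ℂ) (h1 : 0 < κ.re) (h2 : 0 < κ.im) (n : ℤ) :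
    2*κ.re*κ.im ≤ ‖(n:ℂ)^2 - κ^2‖ := by
  have h := Complex.abs_im_le_norm ((n:ℂ)^2 - κ^2)
  rw [zK_im] at h
  rw [abs_neg, abs_of_pos (by positivity)] at h
  exact h

lemma A_pos (κ : ℂ) (h1 : 0 < κ.re) (h2 : 0 < κ.im) (n : ℤ) :
    0 < ‖(n:ℂ)^2 - κ^2‖ := by
  have := beta_le_A κ h1 h2 n
  nlinarith

lemma A_le (κ : ℂ) (n : ℤ) :
    ‖(n:ℂ)^2 - κ^2‖ ≤ (n:ℝ)^2 + ‖κ‖^2 := by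
  have habs : ‖(n:ℂ)^2‖ = (n:ℝ)^2 := by
    rw [norm_pow, Complex.norm_intCast]
    rw [sq_abs]
  calc ‖(n:ℂ)^2 - κ^2‖ ≤ ‖(n:ℂ)^2‖ + ‖κ^2‖ := by
        rw [sub_eq_add_neg]
        refine (norm_add_le _ _).trans ?_
        rw [norm_neg]
    _ = (n:ℝ)^2 + ‖κ‖^2 := by rw [habs, norm_pow]

lemma A_sq (κ : ℂ) (n : ℤ) :
    ‖(n:ℂ)^2 - κ^2‖^2
      = (((n:ℂ)^2 - κ^2).re)^2 + (2*κ.re*κ.im)^2 := by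
  rw [Complex.sq_norm, Complex.normSq_apply, zK_im]
  ring

lemma sobWt_zero : sobWt (-(1/2)) 0 = 1 := by simp [sobWt]

lemma sobWt_ne {n : ℤ} (hn : n ≠ 0) : sobWt (-(1/2)) n = |(n:ℝ)|⁻¹ := by
  rw [sobWt, if_neg hn, show (2:ℝ)*(-(1/2)) = -1 by norm_num, Real.rpow_neg_one]

lemma one_le_absn {n : ℤ} (hn : n ≠ 0) : 1 ≤ |(n:ℝ)| := by
  rw [← Int.cast_abs]
  exact_mod_cast Int.one_le_abs (by omega)

lemma sobWt_nonneg (n : ℤ) : 0 ≤ sobWt (-(1/2)) n := by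
  by_cases hn : n = 0
  · subst hn; rw [sobWt_zero]; norm_num
  · rw [sobWt_ne hn]; positivity

lemma sobWt_le_one (n : ℤ) : sobWt (-(1/2)) n ≤ 1 := by
  by_cases hn : n = 0
  · subst hn; rw [sobWt_zero]
  · rw [sobWt_ne hn]
    have := one_le_absn hn
    rw [inv_le_one_iff₀]
    right; exact this

lemma low1 (c t A r M2 : ℝ) (hc : 0 ≤ c) (hcsq : c^2 * (2*(1+M2)) ≤ 1)
    (ht : 1 ≤ t) (hA : 0 < A) (hAle : A ≤ t^2*(1+M2)) (hr : 0 ≤ r) (hM2 : 0 ≤ M2) :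
    (c * t⁻¹ * A)^2 ≤ (A+r)/2 := by
  have ht0 : 0 < t := by linarith
  have hu : t⁻¹ * t = 1 := inv_mul_cancel₀ ht0.ne'
  have key : 2*c^2*A ≤ t^2 := by nlinarith
  have h3 : 2*c^2*A*(A*t⁻¹^2) ≤ t^2*(A*t⁻¹^2) :=
    mul_le_mul_of_nonneg_right key (by positivity)
  have h4 : t^2*(A*t⁻¹^2) = A := by
    field_simp
  rw [h4] at h3
  nlinarith [h3, hr]

lemma low2 (c A r T β : ℝ) (hc : 0 ≤ c) (hcsq : c^2 * (4*T) ≤ β^2)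
    (hA : 0 < A) (hT : A^3 ≤ T) (huni : β^2 ≤ 2*A*(A+r)) :
    (c*A)^2 ≤ (A+r)/2 := by
  have hT0 : 0 < T := lt_of_lt_of_le (by positivity) hT
  have hAr : 0 ≤ A + r := by nlinarith [sq_nonneg β]
  rw [le_div_iff₀ (by norm_num : (0:ℝ) < 2)]
  have chain : (c*A)^2*2*(2*T) ≤ (A+r)*(2*T) := by
    have h5 : c^2*(4*T)*A^2 ≤ β^2*A^2 := mul_le_mul_of_nonneg_right hcsq (sq_nonneg A)
    have h6 : β^2*A^2 ≤ 2*A*(A+r)*A^2 := mul_le_mul_of_nonneg_right huni (sq_nonneg A)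
    have h7 : 2*A*(A+r)*A^2 ≤ 2*T*(A+r) := by nlinarith
    nlinarith [h5, h6, h7]
  exact le_of_mul_le_mul_right chain (by positivity)

lemma key_lower (κ : ℂ) (h1 : 0 < κ.re) (h2 : 0 < κ.im) (n : ℤ) :
    min ((Real.sqrt (2*(1+‖κ‖^2)))⁻¹)
        (2*κ.re*κ.im / (2*Real.sqrt ((2*‖κ‖^2)^3))) * sobWt (-(1/2)) n
      ≤ ((rootK κ n)⁻¹).re := by
  set M2 := ‖κ‖ ^ 2 with hM2def
  have hM2 : 0 < M2 := by
    have hk : κ ≠ 0 := fun h => by simp [h] at h1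
    exact pow_pos (norm_pos_iff.mpr hk) 2
  set β := 2*κ.re*κ.im with hβdef
  have hβ : 0 < β := by positivity
  set A := ‖(n:ℂ)^2 - κ^2‖ with hAdef
  set r := ((n:ℂ)^2 - κ^2).re with hrdef
  have hA : 0 < A := A_pos κ h1 h2 n
  have hAle : A ≤ (n:ℝ)^2 + M2 := A_le κ n
  have hA2 : A^2 = r^2 + β^2 := A_sq κ n
  have huni : β^2 ≤ 2*A*(A+r) := by nlinarith [sq_nonneg (A+r)]
  set c1 := (Real.sqrt (2*(1+M2)))⁻¹ with hc1def
  set c2 := β / (2*Real.sqrt ((2*M2)^3)) with hc2def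
  set c := min c1 c2 with hcdef
  have hc1 : 0 ≤ c1 := by positivity
  have hc2 : 0 ≤ c2 := by positivity
  have hc : 0 ≤ c := le_min hc1 hc2
  set w := sobWt (-(1/2)) n with hwdef
  have hw0 : 0 ≤ w := sobWt_nonneg n
  have hw1 : w ≤ 1 := sobWt_le_one n
  rw [rootK_inv_re κ h1 h2 n, le_div_iff₀ hA]
  apply Real.le_sqrt_of_sq_le
  by_cases hcase : n ≠ 0 ∧ 0 ≤ r
  · obtain ⟨hn, hr⟩ := hcase
    have hwt : w = |(n:ℝ)|⁻¹ := sobWt_ne hn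
    have ht := one_le_absn hn
    have htn2 : |(n:ℝ)|^2 = (n:ℝ)^2 := sq_abs _
    have h1sq : (1:ℝ) ≤ |(n:ℝ)|^2 := by nlinarith
    have hAle' : A ≤ |(n:ℝ)|^2*(1+M2) := by
      nlinarith [mul_le_mul_of_nonneg_right h1sq hM2.le]
    have hcsq : c^2 * (2*(1+M2)) ≤ 1 := by
      have hx : (0:ℝ) < 2*(1+M2) := by linarith
      have hc1sq : c1^2 = (2*(1+M2))⁻¹ := by
        rw [hc1def, inv_pow, Real.sq_sqrt hx.le]
      have : c^2 ≤ c1^2 := pow_le_pow_left₀ hc (min_le_left _ _) 2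
      rw [hc1sq] at this
      calc c^2 * (2*(1+M2)) ≤ (2*(1+M2))⁻¹ * (2*(1+M2)) :=
            mul_le_mul_of_nonneg_right this hx.le
        _ = 1 := inv_mul_cancel₀ hx.ne'
    rw [hwt]
    exact low1 c |(n:ℝ)| A r M2 hc hcsq ht hA hAle' hr hM2.le
  · have hn2 : (n:ℝ)^2 ≤ M2 := by
      rcases not_and_or.mp hcase with hn | hr
      · push_neg at hn
        subst hn
        simpa using hM2.le
      · push_neg at hr
        have hre : r = (n:ℝ)^2 - (κ.re^2 - κ.im^2) := zK_re κ n
        have hM2' : M2 = κ.re^2 + κ.im^2 := by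
          rw [hM2def, Complex.sq_norm, Complex.normSq_apply]; ring
        nlinarith
    have hA2M : A ≤ 2*M2 := by linarith
    set T := (2*M2)^3 with hTdef
    have hT0 : 0 < T := by positivity
    have hT : A^3 ≤ T := by
      rw [hTdef]
      exact pow_le_pow_left₀ hA.le hA2M 3
    have hS : Real.sqrt T ^ 2 = T := Real.sq_sqrt hT0.le
    have hSpos : 0 < Real.sqrt T := Real.sqrt_pos.mpr hT0
    have hc2sq : c2^2 * (4*T) = β^2 := by
      have h2' : (2*Real.sqrt T)^2 = 4*T := by rw [mul_pow, hS]; norm_num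
      rw [hc2def, div_pow, h2']
      exact div_mul_cancel₀ _ (by positivity)
    have hcw : 0 ≤ c*w := mul_nonneg hc hw0
    have hcwle : c*w ≤ c2 := by
      calc c*w ≤ c*1 := mul_le_mul_of_nonneg_left hw1 hc
        _ = c := mul_one c
        _ ≤ c2 := min_le_right _ _
    have hcsq : (c*w)^2 * (4*T) ≤ β^2 := by
      rw [← hc2sq]
      exact mul_le_mul_of_nonneg_right (pow_le_pow_left₀ hcw hcwle 2) (by positivity)
    have := low2 (c*w) A r T β hcw hcsq hA hT huni
    calc (c*w*A)^2 = ((c*w)*A)^2 := by ring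
      _ ≤ (A+r)/2 := this

lemma key_upper (κ : ℂ) (h1 : 0 < κ.re) (h2 : 0 < κ.im) (n : ℤ) :
    ‖(rootK κ n)⁻¹‖
      ≤ (Real.sqrt 2 + Real.sqrt 2 * ‖κ‖ / Real.sqrt (2*κ.re*κ.im)
          + (Real.sqrt (2*κ.re*κ.im))⁻¹) * sobWt (-(1/2)) n := by
  set β := 2*κ.re*κ.im with hβdef
  have hβ : 0 < β := by positivity
  set M := ‖κ‖ with hMdef
  have hM : 0 ≤ M := norm_nonneg κ
  set A := ‖(n:ℂ)^2 - κ^2‖ with hAdef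
  have hA : 0 < A := A_pos κ h1 h2 n
  have hβA : β ≤ A := beta_le_A κ h1 h2 n
  have hsb : 0 < Real.sqrt β := Real.sqrt_pos.mpr hβ
  have hsA : 0 < Real.sqrt A := Real.sqrt_pos.mpr hA
  have hsbA : Real.sqrt β ≤ Real.sqrt A := Real.sqrt_le_sqrt hβA
  set C := Real.sqrt 2 + Real.sqrt 2 * M / Real.sqrt β + (Real.sqrt β)⁻¹ with hCdef
  have hs2 : (0:ℝ) ≤ Real.sqrt 2 := Real.sqrt_nonneg 2
  have hs2sq : Real.sqrt 2 ^ 2 = 2 := Real.sq_sqrt (by norm_num)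
  rw [rootK_abs_inv κ h1 h2 n, ← hAdef]
  by_cases hn : n = 0
  · subst hn
    rw [sobWt_zero, mul_one]
    have h1' : (Real.sqrt A)⁻¹ ≤ (Real.sqrt β)⁻¹ := by
      apply inv_anti₀ hsb hsbA
    have : 0 ≤ Real.sqrt 2 * M / Real.sqrt β := by positivity
    rw [hCdef]
    linarith
  · rw [sobWt_ne hn]
    set t := |(n:ℝ)| with htdef
    have ht : 1 ≤ t := one_le_absn hn
    have ht0 : 0 < t := by linarith
    rw [inv_eq_one_div, inv_eq_one_div, mul_one_div, div_le_div_iff₀ hsA ht0]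
    rw [one_mul]
    -- goal : t ≤ C * √A
    by_cases hts : t^2 ≤ 2*M^2
    · have htle : t ≤ Real.sqrt 2 * M := by
        have : t = Real.sqrt (t^2) := (Real.sqrt_sq ht0.le).symm
        rw [this]
        calc Real.sqrt (t^2) ≤ Real.sqrt (2*M^2) := Real.sqrt_le_sqrt hts
          _ = Real.sqrt 2 * M := by
              rw [Real.sqrt_mul (by norm_num : (0:ℝ) ≤ 2), Real.sqrt_sq hM]
      have hsplit : Real.sqrt 2 * M / Real.sqrt β * Real.sqrt β = Real.sqrt 2 * M :=
        div_mul_cancel₀ _ hsb.ne'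
      have h5 : Real.sqrt 2 * M / Real.sqrt β * Real.sqrt β
          ≤ Real.sqrt 2 * M / Real.sqrt β * Real.sqrt A := by
        apply mul_le_mul_of_nonneg_left hsbA (by positivity)
      rw [hCdef]
      nlinarith [mul_nonneg hs2 hsA.le, mul_nonneg (inv_nonneg.mpr hsb.le) hsA.le]
    · push_neg at hts
      have hre : ((n:ℂ)^2 - κ^2).re = (n:ℝ)^2 - (κ.re^2 - κ.im^2) := zK_re κ n
      have hM2 : M^2 = κ.re^2 + κ.im^2 := by
        rw [hMdef, Complex.sq_norm, Complex.normSq_apply]; ring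
      have hrA : ((n:ℂ)^2 - κ^2).re ≤ A := by
        have := Complex.abs_re_le_norm ((n:ℂ)^2 - κ^2)
        calc ((n:ℂ)^2 - κ^2).re ≤ |((n:ℂ)^2 - κ^2).re| := le_abs_self _
          _ ≤ A := this
      have htn : t^2 = (n:ℝ)^2 := sq_abs _
      have hA2 : t^2/2 ≤ A := by nlinarith
      have htle : t ≤ Real.sqrt 2 * Real.sqrt A := by
        rw [← Real.sqrt_mul (by norm_num : (0:ℝ) ≤ 2)]
        apply Real.le_sqrt_of_sq_le
        linarith
      have h6 : 0 ≤ Real.sqrt 2 * M / Real.sqrt β * Real.sqrt A := by positivity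
      have h7 : 0 ≤ (Real.sqrt β)⁻¹ * Real.sqrt A := by positivity
      rw [hCdef]
      nlinarith


/-- Coercivity of Λ_κ : there is c > 0 with Re⟨Λ_κ φ, φ̄⟩ ≥ c ‖φ‖²_{H^{-1/2}}. -/
theorem stmt12 (κ : ℂ) (h1 : 0 < κ.re) (h2 : 0 < κ.im) :
    ∃ c : ℝ, 0 < c ∧ ∀ φ : ℤ → ℂ,
      (Summable fun n : ℤ => sobWt (-(1 / 2)) n * ‖φ n‖ ^ 2) →
      c * sobNormSq (-(1 / 2)) φ ≤ (pairS (LamKappa κ φ) (conjS φ)).re := by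
  have hκ : κ ≠ 0 := fun h => by simp [h] at h1
  have hM2 : 0 < ‖κ‖ ^ 2 := pow_pos (norm_pos_iff.mpr hκ) 2
  set c := min ((Real.sqrt (2*(1+‖κ‖^2)))⁻¹)
      (2*κ.re*κ.im / (2*Real.sqrt ((2*‖κ‖^2)^3))) with hc
  have hcpos : 0 < c := lt_min (by positivity) (by positivity)
  refine ⟨c, hcpos, ?_⟩
  intro φ hsum
  set C := Real.sqrt 2 + Real.sqrt 2 * ‖κ‖ / Real.sqrt (2*κ.re*κ.im)
      + (Real.sqrt (2*κ.re*κ.im))⁻¹ with hC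
  have hterm : ∀ n : ℤ, LamKappa κ φ n * conjS φ (-n)
      = (rootK κ n)⁻¹ * ((‖φ n‖^2 : ℝ) : ℂ) := by
    intro n
    simp only [LamKappa, conjS, neg_neg]
    rw [mul_assoc, Complex.mul_conj]
    congr 1
    rw [Complex.sq_norm]
  have hbound : ∀ n : ℤ, ‖LamKappa κ φ n * conjS φ (-n)‖
      ≤ C * (sobWt (-(1/2)) n * ‖φ n‖^2) := by
    intro n
    rw [hterm n, norm_mul,
      Complex.norm_real, Real.norm_eq_abs, abs_of_nonneg (by positivity)]
    have h3 := key_upper κ h1 h2 n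
    rw [← hC] at h3
    calc ‖(rootK κ n)⁻¹‖ * ‖φ n‖^2
        ≤ (C * sobWt (-(1/2)) n) * ‖φ n‖^2 :=
          mul_le_mul_of_nonneg_right h3 (by positivity)
      _ = C * (sobWt (-(1/2)) n * ‖φ n‖^2) := by ring
  have hsummable : Summable (fun n : ℤ => LamKappa κ φ n * conjS φ (-n)) :=
    Summable.of_norm_bounded (hsum.mul_left C) hbound
  have hre : (pairS (LamKappa κ φ) (conjS φ)).re
      = ∑' n : ℤ, ((rootK κ n)⁻¹).re * ‖φ n‖^2 := by
    rw [pairS, Complex.re_tsum hsummable]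
    congr 1
    funext n
    rw [hterm n]
    simp [Complex.mul_re, ← Complex.ofReal_pow]
  have hsum2 : Summable (fun n : ℤ => ((rootK κ n)⁻¹).re * ‖φ n‖^2) := by
    apply Summable.of_norm_bounded (hsum.mul_left C)
    intro n
    rw [Real.norm_eq_abs, abs_mul, abs_of_nonneg (by positivity : (0:ℝ) ≤ ‖φ n‖^2)]
    have h3 := key_upper κ h1 h2 n
    rw [← hC] at h3
    have h4 : |((rootK κ n)⁻¹).re| ≤ ‖(rootK κ n)⁻¹‖ := Complex.abs_re_le_norm _
    calc |((rootK κ n)⁻¹).re| * ‖φ n‖^2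
        ≤ (C * sobWt (-(1/2)) n) * ‖φ n‖^2 :=
          mul_le_mul_of_nonneg_right (h4.trans h3) (by positivity)
      _ = C * (sobWt (-(1/2)) n * ‖φ n‖^2) := by ring
  rw [hre, sobNormSq, ← tsum_mul_left]
  apply Summable.tsum_le_tsum _ (hsum.mul_left c) hsum2
  intro n
  have hk := key_lower κ h1 h2 n
  rw [← hc] at hk
  calc c * (sobWt (-(1/2)) n * ‖φ n‖^2)
      = (c * sobWt (-(1/2)) n) * ‖φ n‖^2 := by ring
    _ ≤ ((rootK κ n)⁻¹).re * ‖φ n‖^2 :=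
        mul_le_mul_of_nonneg_right hk (by positivity)
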